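/- arXiv:quant-ph/0411204 — 2 statements merged into one kernel-verified Lean document; each statement's English description precedes it below -/
import Mathlib

section
/- Let σ > 0, and let N, M be reals with N ≥ 2 and N^{10} ≤ M. Let β > 0 and m* = ⌈(log M − 10 log N)/log(1/β)⌉ with 0 < β < 1. Then ∑_{k=0}^{m*} √(N log N / (10 log N + k·log(1/β))) ≤ (∑_{k=1}^{⌈log(log M/log N)⌉} (2^k log N / log(1/β))·(1/√(2^k log N)))·C ≤ C'·√(N log N · log M)/log(1/β) for suitable absolute constants C, C' (e.g., C' = 4/(√2 − 1)). -/
lemma two_sqrt_two_le : 2 * Real.sqrt 2 ≤ 4 / (Real.sqrt 2 - 1) := by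
  have hs2 : Real.sqrt 2 ^ 2 = 2 := Real.sq_sqrt (by norm_num)
  have hs2lb : 1 < Real.sqrt 2 := by nlinarith [Real.sqrt_nonneg 2]
  rw [le_div_iff₀ (by linarith)]
  nlinarith

/-- The dyadic-decomposition sum bound of Lemma 5: for `N ≥ 2`, `M ≥ N^10`,
`0 < β < 1` with `β ≥ 1/N` (as for the β used in ROIPL), and
`m* = ⌈(log M - 10 log N)/log(1/β)⌉`,
`∑_{k=0}^{m*} √(N log N/(10 log N + k log(1/β))) ≤ C'·√(N log N log M)/log(1/β)`
with the absolute constant `C' = 4/(√2 - 1)`. -/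
theorem stmt10 (N M β : ℝ) (hN : 2 ≤ N) (hM : N ^ 10 ≤ M)
    (hβ0 : 0 < β) (hβ1 : β < 1) (hβ2 : 1 / N ≤ β) :
    ∑ k ∈ Finset.range
        (⌈(Real.log M - 10 * Real.log N) / Real.log (1 / β)⌉₊ + 1),
      Real.sqrt (N * Real.log N / (10 * Real.log N + k * Real.log (1 / β)))
      ≤ (4 / (Real.sqrt 2 - 1)) * Real.sqrt (N * Real.log N * Real.log M)
          / Real.log (1 / β) := by
  set A := Real.log N with hA_def
  set L := Real.log (1 / β) with hL_def
  have hA : 0 < A := Real.log_pos (by linarith)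
  have hL : 0 < L := Real.log_pos (one_lt_one_div hβ0 hβ1)
  have hβN : 1 / β ≤ N := by
    rw [div_le_iff₀ hβ0]
    calc (1:ℝ) = N * (1/N) := by field_simp
    _ ≤ N * β := by
      apply mul_le_mul_of_nonneg_left hβ2 (by linarith)
  have hLA : L ≤ A := Real.log_le_log (by positivity) hβN
  have hlogM : 10 * A ≤ Real.log M := by
    have h1 : Real.log (N ^ 10) ≤ Real.log M :=
      Real.log_le_log (by positivity) hM
    rw [Real.log_pow] at h1
    push_cast at h1
    linarith
  have hMpos : 0 < Real.log M := by linarith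
  set m := ⌈(Real.log M - 10 * A) / L⌉₊ with hm_def
  have hmlt : (m : ℝ) < (Real.log M - 10 * A) / L + 1 :=
    Nat.ceil_lt_add_one (div_nonneg (by linarith) hL.le)
  have hmL : (m : ℝ) * L ≤ Real.log M - 10 * A + L := by
    have := mul_lt_mul_of_pos_right hmlt hL
    rw [div_add' _ _ _ hL.ne', div_mul_cancel₀] at this
    · linarith
    · exact hL.ne'
  -- g j = √(10A + j L - L)
  set g : ℕ → ℝ := fun j => Real.sqrt (10 * A + (j : ℝ) * L - L) with hg_def
  have key : ∀ k ∈ Finset.range (m + 1),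
      Real.sqrt (N * A / (10 * A + (k : ℝ) * L))
        ≤ Real.sqrt (N * A) * ((2 / L) * (g (k + 1) - g k)) := by
    intro k _
    have hk0 : (0:ℝ) ≤ (k : ℝ) := Nat.cast_nonneg k
    set a := 10 * A + (k : ℝ) * L with ha_def
    have ha : 0 < a := by nlinarith
    have haL : 0 < a - L := by nlinarith
    have hgk1 : g (k + 1) = Real.sqrt a := by
      simp only [hg_def]
      congr 1
      push_cast
      ring
    have hgk : g k = Real.sqrt (a - L) := by
      simp only [hg_def, ha_def]
    rw [hgk1, hgk]
    set s := Real.sqrt a with hs_def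
    set t := Real.sqrt (a - L) with ht_def
    have hs : 0 < s := Real.sqrt_pos.mpr ha
    have ht : 0 ≤ t := Real.sqrt_nonneg _
    have hs2 : s ^ 2 = a := Real.sq_sqrt ha.le
    have ht2 : t ^ 2 = a - L := Real.sq_sqrt haL.le
    have hstep : 1 / s ≤ (2 / L) * (s - t) := by
      rw [div_le_iff₀ hs]
      have h1 : L ≤ 2 * s * (s - t) := by nlinarith [sq_nonneg (s - t)]
      calc (1:ℝ) = (2 / L) * (L / 2) := by field_simp
      _ ≤ (2 / L) * (s * (s - t)) := by
        apply mul_le_mul_of_nonneg_left _ (by positivity)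
        linarith
      _ = 2 / L * (s - t) * s := by ring
    have hdiv : Real.sqrt (N * A / a) = Real.sqrt (N * A) * (1 / s) := by
      rw [Real.sqrt_div (by positivity)]
      field_simp
      exact hs_def
    rw [hdiv]
    exact mul_le_mul_of_nonneg_left hstep (Real.sqrt_nonneg _)
  calc ∑ k ∈ Finset.range (m + 1),
        Real.sqrt (N * A / (10 * A + (k : ℝ) * L))
      ≤ ∑ k ∈ Finset.range (m + 1),
        Real.sqrt (N * A) * ((2 / L) * (g (k + 1) - g k)) :=
        Finset.sum_le_sum key
    _ = Real.sqrt (N * A) * (2 / L) * (g (m + 1) - g 0) := by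
        rw [← Finset.sum_range_sub g]
        rw [Finset.mul_sum]
        congr 1
        ext k
        ring
    _ ≤ Real.sqrt (N * A) * (2 / L) * Real.sqrt (2 * Real.log M) := by
        apply mul_le_mul_of_nonneg_left _ (by positivity)
        have hg0 : 0 ≤ g 0 := Real.sqrt_nonneg _
        have : g (m + 1) ≤ Real.sqrt (2 * Real.log M) := by
          apply Real.sqrt_le_sqrt
          push_cast
          nlinarith
        linarith
    _ ≤ (4 / (Real.sqrt 2 - 1)) * Real.sqrt (N * A * Real.log M) / L := by
        have h2 : Real.sqrt (2 * Real.log M) =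
            Real.sqrt 2 * Real.sqrt (Real.log M) := Real.sqrt_mul (by norm_num) _
        have h3 : Real.sqrt (N * A * Real.log M) =
            Real.sqrt (N * A) * Real.sqrt (Real.log M) := Real.sqrt_mul (by positivity) _
        rw [h2, h3]
        have hs2 : Real.sqrt 2 ^ 2 = 2 := Real.sq_sqrt (by norm_num)
        have hs2lb : 1 < Real.sqrt 2 := by
          nlinarith [Real.sqrt_nonneg 2]
        have hs2ub : Real.sqrt 2 ≤ 2 := by
          nlinarith [Real.sqrt_nonneg 2]
        rw [le_div_iff₀ hL]
        have hc := two_sqrt_two_le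
        have hnn : 0 ≤ Real.sqrt (N * A) * Real.sqrt (Real.log M) := by positivity
        calc Real.sqrt (N * A) * (2 / L) * (Real.sqrt 2 * Real.sqrt (Real.log M)) * L
            = (2 * Real.sqrt 2) * (Real.sqrt (N * A) * Real.sqrt (Real.log M)) := by
              field_simp
          _ ≤ (4 / (Real.sqrt 2 - 1)) * (Real.sqrt (N * A) * Real.sqrt (Real.log M)) :=
              mul_le_mul_of_nonneg_right hc hnn
end

section
/- Let W: ℕ → ℝ satisfy W(s) ≤ max(W(1), ..., W(⌊s/2⌋)) + c/√(log₂ s) for all s with s ≥ 2, and W(1) = 0, where c > 0. Then W(M) ≤ c·∑_{j=1}^{⌈log₂ M⌉} 1/√j ≤ 2c·√(log₂ M) for all M ≥ 2. -/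
lemma sum_sqrt_le (n : ℕ) : ∑ j ∈ Finset.Icc 1 n, 1 / Real.sqrt j ≤ 2 * Real.sqrt n := by
  induction n with
  | zero => simp
  | succ n ih =>
    rw [Finset.sum_Icc_succ_top (by omega)]
    have ha : Real.sqrt n ≥ 0 := Real.sqrt_nonneg _
    have hb : Real.sqrt ((n:ℝ)+1) > 0 := Real.sqrt_pos.mpr (by positivity)
    have ha2 : Real.sqrt n ^ 2 = n := Real.sq_sqrt (by positivity)
    have hb2 : Real.sqrt ((n:ℝ)+1) ^ 2 = (n:ℝ)+1 := Real.sq_sqrt (by positivity)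
    have key : 1 / Real.sqrt ((n:ℝ)+1) ≤ 2 * Real.sqrt ((n:ℝ)+1) - 2 * Real.sqrt n := by
      rw [div_le_iff₀ hb]
      nlinarith [sq_nonneg (Real.sqrt ((n:ℝ)+1) - Real.sqrt n)]
    push_cast
    push_cast at ih
    linarith

lemma main_aux (c : ℝ) (hc : 0 < c) (W : ℕ → ℝ) (hW1 : W 1 = 0)
    (hrec : ∀ s : ℕ, 2 ≤ s → ∃ i : ℕ, 1 ≤ i ∧ i ≤ s / 2 ∧
      W s ≤ W i + c / Real.sqrt (Real.logb 2 s)) :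
    ∀ M : ℕ, 1 ≤ M →
      W M ≤ c * ∑ j ∈ Finset.Icc 1 ⌊Real.logb 2 M⌋₊, 1 / Real.sqrt j := by
  intro M
  induction M using Nat.strong_induction_on with
  | _ M ih =>
    intro hM
    rcases eq_or_lt_of_le hM with h1 | h2
    · simp [← h1, hW1]
    · obtain ⟨i, hi1, hi2, hWle⟩ := hrec M (by omega)
      have hiM : i < M := by omega
      have hIH := ih i hiM hi1
      set x := Real.logb 2 (M : ℝ) with hxdef
      have hM2 : (2:ℝ) ≤ (M:ℝ) := by exact_mod_cast h2
      have hx1 : 1 ≤ x := by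
        have := Real.logb_le_logb_of_le (b := 2) (by norm_num) (by norm_num) hM2
        simpa using this
      have hxfl1 : 1 ≤ ⌊x⌋₊ := Nat.le_floor (by exact_mod_cast hx1)
      have h2i : (2:ℝ) * i ≤ (M:ℝ) := by exact_mod_cast (show 2*i ≤ M by omega)
      have hlogi : Real.logb 2 (i:ℝ) ≤ x - 1 := by
        have h := Real.logb_le_logb_of_le (b := 2) (by norm_num) (by positivity) h2i
        rw [Real.logb_mul (by norm_num) (by positivity)] at h
        rw [Real.logb_self_eq_one (by norm_num)] at h
        linarith
      have hfloori : ⌊Real.logb 2 (i:ℝ)⌋₊ ≤ ⌊x⌋₊ - 1 := by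
        have h := Nat.floor_le_floor hlogi
        rwa [show x - 1 = x - (1:ℕ) by norm_num, Nat.floor_sub_natCast] at h
      -- split off top term
      have hsplit : ∑ j ∈ Finset.Icc 1 ⌊x⌋₊, 1 / Real.sqrt j
          = ∑ j ∈ Finset.Icc 1 (⌊x⌋₊ - 1), 1 / Real.sqrt j + 1 / Real.sqrt (⌊x⌋₊ : ℝ) := by
        rw [show ⌊x⌋₊ = (⌊x⌋₊ - 1) + 1 from by omega, Finset.sum_Icc_succ_top (by omega)]
        norm_num
      have hmono : ∑ j ∈ Finset.Icc 1 ⌊Real.logb 2 (i:ℝ)⌋₊, 1 / Real.sqrt j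
          ≤ ∑ j ∈ Finset.Icc 1 (⌊x⌋₊ - 1), 1 / Real.sqrt j := by
        apply Finset.sum_le_sum_of_subset_of_nonneg
        · exact Finset.Icc_subset_Icc_right hfloori
        · intro j _ _; positivity
      have hxpos : 0 < x := by linarith
      have hfx : (⌊x⌋₊ : ℝ) ≤ x := Nat.floor_le (le_of_lt hxpos)
      have hsq : Real.sqrt (⌊x⌋₊ : ℝ) ≤ Real.sqrt x := Real.sqrt_le_sqrt hfx
      have hsqpos : 0 < Real.sqrt (⌊x⌋₊ : ℝ) := Real.sqrt_pos.mpr (by exact_mod_cast hxfl1)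
      have hdiv : 1 / Real.sqrt x ≤ 1 / Real.sqrt (⌊x⌋₊ : ℝ) :=
        one_div_le_one_div_of_le hsqpos hsq
      calc W M ≤ W i + c / Real.sqrt x := hWle
        _ ≤ c * ∑ j ∈ Finset.Icc 1 ⌊Real.logb 2 (i:ℝ)⌋₊, 1 / Real.sqrt j + c * (1 / Real.sqrt (⌊x⌋₊ : ℝ)) := by
            have : c / Real.sqrt x ≤ c * (1 / Real.sqrt (⌊x⌋₊ : ℝ)) := by
              rw [div_eq_mul_one_div]
              exact mul_le_mul_of_nonneg_left hdiv (le_of_lt hc)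
            linarith [hIH]
        _ ≤ c * ∑ j ∈ Finset.Icc 1 (⌊x⌋₊ - 1), 1 / Real.sqrt j + c * (1 / Real.sqrt (⌊x⌋₊ : ℝ)) := by
            nlinarith [hmono]
        _ = c * ∑ j ∈ Finset.Icc 1 ⌊x⌋₊, 1 / Real.sqrt j := by rw [hsplit]; ring

/-- If `W : ℕ → ℝ` satisfies `W 1 = 0` and, for every `s ≥ 2`,
`W s ≤ max(W 1, …, W ⌊s/2⌋) + c/√(log₂ s)` (equivalently, `W s ≤ W i + c/√(log₂ s)`
for some `1 ≤ i ≤ ⌊s/2⌋`), then `W M ≤ c ∑_{j=1}^{⌈log₂ M⌉} 1/√j ≤ 2c√(log₂ M)`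
for all `M ≥ 2`. -/
theorem stmt11 (c : ℝ) (hc : 0 < c) (W : ℕ → ℝ) (hW1 : W 1 = 0)
    (hrec : ∀ s : ℕ, 2 ≤ s → ∃ i : ℕ, 1 ≤ i ∧ i ≤ s / 2 ∧
      W s ≤ W i + c / Real.sqrt (Real.logb 2 s)) :
    ∀ M : ℕ, 2 ≤ M →
      W M ≤ c * ∑ j ∈ Finset.Icc 1 ⌈Real.logb 2 M⌉₊, 1 / Real.sqrt j ∧
      W M ≤ 2 * c * Real.sqrt (Real.logb 2 M) := by
  intro M hM
  have haux := main_aux c hc W hW1 hrec M (by omega)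
  set x := Real.logb 2 (M : ℝ)
  have hx0 : 0 ≤ x := by
    have hM2 : (2:ℝ) ≤ (M:ℝ) := by exact_mod_cast hM
    have := Real.logb_le_logb_of_le (b := 2) (by norm_num) (by norm_num) hM2
    simp at this; linarith [this]
  constructor
  · refine le_trans haux ?_
    apply mul_le_mul_of_nonneg_left _ (le_of_lt hc)
    apply Finset.sum_le_sum_of_subset_of_nonneg
    · exact Finset.Icc_subset_Icc_right (Nat.floor_le_ceil x)
    · intro j _ _; positivity
  · refine le_trans haux ?_
    have h1 : ∑ j ∈ Finset.Icc 1 ⌊x⌋₊, 1 / Real.sqrt j ≤ 2 * Real.sqrt (⌊x⌋₊ : ℝ) :=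
      sum_sqrt_le _
    have h2 : Real.sqrt (⌊x⌋₊ : ℝ) ≤ Real.sqrt x := Real.sqrt_le_sqrt (Nat.floor_le hx0)
    calc c * ∑ j ∈ Finset.Icc 1 ⌊x⌋₊, 1 / Real.sqrt j ≤ c * (2 * Real.sqrt (⌊x⌋₊ : ℝ)) :=
          mul_le_mul_of_nonneg_left h1 (le_of_lt hc)
      _ ≤ 2 * c * Real.sqrt x := by nlinarith
end
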